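/- For every j ∈ ℤ the discrete convolutions satisfy: (i) |A_j − A_{j−1}| ≤ Δx·(sup |μ'|)·m; (ii) |s_j − s_{j−1}| ≤ 2θ·Δx·(sup |μ'|)·m; and (iii) |A⁻_{j+1/2} − A⁻_{j−1/2}| ≤ (1 + θ)·Δx·(sup |μ'|)·m and |A⁺_{j−1/2} − A⁺_{j−3/2}| ≤ (1 + θ)·Δx·(sup |μ'|)·m. -/

import Mathlib

open MeasureTheory

noncomputable section

/-- minmod limiter of three arguments. -/
def minmod3 (a b c : ℝ) : ℝ :=
  if 0 < a ∧ 0 < b ∧ 0 < c then min a (min b c)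
  else if a < 0 ∧ b < 0 ∧ c < 0 then max a (max b c)
  else 0

/-- MUSCL slopes `σ_j = 2θ·minmod(ρ_j − ρ_{j−1}, (ρ_{j+1} − ρ_{j−1})/2, ρ_{j+1} − ρ_j)`. -/
def slp (θ : ℝ) (ρ : ℤ → ℝ) (j : ℤ) : ℝ :=
  2 * θ * minmod3 (ρ j - ρ (j - 1)) ((ρ (j + 1) - ρ (j - 1)) / 2) (ρ (j + 1) - ρ j)

/-- left interface value `ρ⁻_{j+1/2} = ρ_j + σ_j/2`. -/
def intL (θ : ℝ) (ρ : ℤ → ℝ) (j : ℤ) : ℝ := ρ j + slp θ ρ j / 2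

/-- right interface value `ρ⁺_{j−1/2} = ρ_j − σ_j/2`. -/
def intR (θ : ℝ) (ρ : ℤ → ℝ) (j : ℤ) : ℝ := ρ j - slp θ ρ j / 2

/-- discrete convolution `A_j = Δx·Σ_l μ((j−l)Δx)·ρ_l`. -/
def Adisc (μ : ℝ → ℝ) (Δx : ℝ) (ρ : ℤ → ℝ) (j : ℤ) : ℝ :=
  Δx * ∑' l : ℤ, μ (((j : ℝ) - (l : ℝ)) * Δx) * ρ l

/-- `s_j = θ·(A_{j+1} − A_{j−1})`. -/
def sdisc (μ : ℝ → ℝ) (θ Δx : ℝ) (ρ : ℤ → ℝ) (j : ℤ) : ℝ :=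
  θ * (Adisc μ Δx ρ (j + 1) - Adisc μ Δx ρ (j - 1))

/-- `A⁻_{j+1/2} = A_j + s_j/2`. -/
def AdiscL (μ : ℝ → ℝ) (θ Δx : ℝ) (ρ : ℤ → ℝ) (j : ℤ) : ℝ :=
  Adisc μ Δx ρ j + sdisc μ θ Δx ρ j / 2

/-- `A⁺_{j−1/2} = A_j − s_j/2`. -/
def AdiscR (μ : ℝ → ℝ) (θ Δx : ℝ) (ρ : ℤ → ℝ) (j : ℤ) : ℝ :=
  Adisc μ Δx ρ j - sdisc μ θ Δx ρ j / 2

/-- mid-time value `ρ^{½,−}_{j+1/2}`. -/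
def midL (f : ℝ → ℝ → ℝ) (μ : ℝ → ℝ) (θ lam Δx : ℝ) (ρ : ℤ → ℝ) (j : ℤ) : ℝ :=
  intL θ ρ j - lam / 2 *
    (f (intL θ ρ j) (AdiscL μ θ Δx ρ j) - f (intR θ ρ j) (AdiscR μ θ Δx ρ j))

/-- mid-time value `ρ^{½,+}_{j−1/2}`. -/
def midR (f : ℝ → ℝ → ℝ) (μ : ℝ → ℝ) (θ lam Δx : ℝ) (ρ : ℤ → ℝ) (j : ℤ) : ℝ :=
  intR θ ρ j - lam / 2 *
    (f (intL θ ρ j) (AdiscL μ θ Δx ρ j) - f (intR θ ρ j) (AdiscR μ θ Δx ρ j))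

/-- mid-time convolution `A^{½}_{j+1/2}`. -/
def Amid (f : ℝ → ℝ → ℝ) (μ : ℝ → ℝ) (θ lam Δx : ℝ) (ρ : ℤ → ℝ) (j : ℤ) : ℝ :=
  Δx / 2 * ∑' l : ℤ,
    (μ (((j : ℝ) + 1 - (l : ℝ)) * Δx) * midR f μ θ lam Δx ρ l +
     μ (((j : ℝ) - (l : ℝ)) * Δx) * midL f μ θ lam Δx ρ l)

/-- Lax–Friedrichs type numerical flux `F(u,v,A)`. -/
def numFlux (f : ℝ → ℝ → ℝ) (α lam u v A : ℝ) : ℝ :=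
  (f u A + f v A) / 2 - α * (v - u) / (2 * lam)

/-- MUSCL–Hancock update `ρ'_j`. -/
def mhUpdate (f : ℝ → ℝ → ℝ) (μ : ℝ → ℝ) (θ α lam Δx : ℝ) (ρ : ℤ → ℝ) (j : ℤ) : ℝ :=
  ρ j - lam *
    (numFlux f α lam (midL f μ θ lam Δx ρ j) (midR f μ θ lam Δx ρ (j + 1))
        (Amid f μ θ lam Δx ρ j) -
     numFlux f α lam (midL f μ θ lam Δx ρ (j - 1)) (midR f μ θ lam Δx ρ j)
        (Amid f μ θ lam Δx ρ (j - 1)))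


lemma adisc_lip (μ : ℝ → ℝ) (Δx Cμ' : ℝ)
    (hΔx : 0 < Δx)
    (hμ : ContDiff ℝ 2 μ) (hμc : HasCompactSupport μ)
    (hCμ' : ∀ x : ℝ, |deriv μ x| ≤ Cμ')
    (ρ : ℤ → ℝ) (hρ : ∀ j : ℤ, 0 ≤ ρ j) (hsum : Summable ρ) (j : ℤ) :
    |Adisc μ Δx ρ j - Adisc μ Δx ρ (j - 1)| ≤ Δx * Cμ' * (Δx * ∑' l : ℤ, ρ l) := by
  have hC0 : 0 ≤ Cμ' := le_trans (abs_nonneg _) (hCμ' 0)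
  have hlip : LipschitzWith ⟨Cμ', hC0⟩ μ := by
    apply lipschitzWith_of_nnnorm_deriv_le (hμ.differentiable (by norm_num))
    intro x
    apply NNReal.coe_le_coe.mp
    show ((‖deriv μ x‖₊ : NNReal) : ℝ) ≤ Cμ'
    simpa using hCμ' x
  obtain ⟨K, hK⟩ := hμc.exists_bound_of_continuous hμ.continuous
  have hsummable : ∀ k : ℤ, Summable (fun l : ℤ => μ (((k : ℝ) - (l : ℝ)) * Δx) * ρ l) := by
    intro k
    apply Summable.of_norm_bounded (hsum.mul_left K)
    intro l
    rw [norm_mul]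
    have h1 : ‖ρ l‖ = ρ l := Real.norm_of_nonneg (hρ l)
    rw [h1]
    exact mul_le_mul_of_nonneg_right (hK _) (hρ l)
  have hdiff : Adisc μ Δx ρ j - Adisc μ Δx ρ (j - 1)
      = Δx * ∑' l : ℤ, (μ (((j : ℝ) - (l : ℝ)) * Δx)
          - μ ((((j - 1 : ℤ) : ℝ) - (l : ℝ)) * Δx)) * ρ l := by
    simp only [Adisc, ← mul_sub]
    rw [← Summable.tsum_sub (hsummable j) (hsummable (j - 1))]
    congr 1
    apply tsum_congr
    intro l
    ring
  rw [hdiff, abs_mul, abs_of_pos hΔx]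
  have hb : |∑' l : ℤ, (μ (((j : ℝ) - (l : ℝ)) * Δx)
          - μ ((((j - 1 : ℤ) : ℝ) - (l : ℝ)) * Δx)) * ρ l|
      ≤ Cμ' * Δx * ∑' l : ℤ, ρ l := by
    have hgsum : HasSum (fun l : ℤ => Cμ' * Δx * ρ l) (Cμ' * Δx * ∑' l : ℤ, ρ l) :=
      (hsum.hasSum.mul_left (Cμ' * Δx))
    rw [← Real.norm_eq_abs]
    refine tsum_of_norm_bounded hgsum ?_
    intro l
    rw [norm_mul, Real.norm_of_nonneg (hρ l)]
    apply mul_le_mul_of_nonneg_right _ (hρ l)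
    have := hlip.dist_le_mul (((j : ℝ) - (l : ℝ)) * Δx) ((((j - 1 : ℤ) : ℝ) - (l : ℝ)) * Δx)
    rw [Real.dist_eq, Real.dist_eq] at this
    have harg : ((j : ℝ) - (l : ℝ)) * Δx - (((j - 1 : ℤ) : ℝ) - (l : ℝ)) * Δx = Δx := by
      push_cast
      ring
    rw [harg, abs_of_pos hΔx] at this
    exact this
  calc Δx * |∑' l : ℤ, (μ (((j : ℝ) - (l : ℝ)) * Δx)
          - μ ((((j - 1 : ℤ) : ℝ) - (l : ℝ)) * Δx)) * ρ l|
      ≤ Δx * (Cμ' * Δx * ∑' l : ℤ, ρ l) := by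
        exact mul_le_mul_of_nonneg_left hb hΔx.le
    _ = Δx * Cμ' * (Δx * ∑' l : ℤ, ρ l) := by ring

/-- Lipschitz bounds on the discrete convolutions. -/
theorem stmt14 (μ : ℝ → ℝ) (Δx θ Cμ' : ℝ)
    (hΔx : 0 < Δx) (hθ0 : 0 ≤ θ) (hθ1 : θ ≤ 1 / 2)
    (hμ : ContDiff ℝ 2 μ) (hμc : HasCompactSupport μ)
    (hCμ' : ∀ x : ℝ, |deriv μ x| ≤ Cμ')
    (ρ : ℤ → ℝ) (hρ : ∀ j : ℤ, 0 ≤ ρ j) (hsum : Summable ρ) (j : ℤ) :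
    |Adisc μ Δx ρ j - Adisc μ Δx ρ (j - 1)| ≤ Δx * Cμ' * (Δx * ∑' l : ℤ, ρ l) ∧
    |sdisc μ θ Δx ρ j - sdisc μ θ Δx ρ (j - 1)| ≤
      2 * θ * Δx * Cμ' * (Δx * ∑' l : ℤ, ρ l) ∧
    |AdiscL μ θ Δx ρ j - AdiscL μ θ Δx ρ (j - 1)| ≤
      (1 + θ) * Δx * Cμ' * (Δx * ∑' l : ℤ, ρ l) ∧
    |AdiscR μ θ Δx ρ j - AdiscR μ θ Δx ρ (j - 1)| ≤
      (1 + θ) * Δx * Cμ' * (Δx * ∑' l : ℤ, ρ l) := by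
  
  have key : ∀ k : ℤ, |Adisc μ Δx ρ k - Adisc μ Δx ρ (k - 1)| ≤ Δx * Cμ' * (Δx * ∑' l : ℤ, ρ l) :=
    fun k => adisc_lip μ Δx Cμ' hΔx hμ hμc hCμ' ρ hρ hsum k
  set B := Δx * Cμ' * (Δx * ∑' l : ℤ, ρ l) with hB
  have hB0 : 0 ≤ B := le_trans (abs_nonneg _) (key j)
  have h1 : |Adisc μ Δx ρ j - Adisc μ Δx ρ (j - 1)| ≤ B := key j
  have h2 : |Adisc μ Δx ρ (j + 1) - Adisc μ Δx ρ j| ≤ B := by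
    have := key (j + 1); simpa using this
  have h3 : |Adisc μ Δx ρ (j - 1) - Adisc μ Δx ρ (j - 2)| ≤ B := by
    have := key (j - 1)
    have e : j - 1 - 1 = j - 2 := by ring
    rwa [e] at this
  have hs : |sdisc μ θ Δx ρ j - sdisc μ θ Δx ρ (j - 1)| ≤ 2 * θ * B := by
    have e : sdisc μ θ Δx ρ j - sdisc μ θ Δx ρ (j - 1)
        = θ * ((Adisc μ Δx ρ (j + 1) - Adisc μ Δx ρ j)
            - (Adisc μ Δx ρ (j - 1) - Adisc μ Δx ρ (j - 2))) := by
      simp only [sdisc]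
      have e2 : j - 1 - 1 = j - 2 := by ring
      have e3 : j - 1 + 1 = j := by ring
      rw [e2, e3]
      ring
    rw [e, abs_mul, abs_of_nonneg hθ0]
    have h4 : |(Adisc μ Δx ρ (j + 1) - Adisc μ Δx ρ j)
        - (Adisc μ Δx ρ (j - 1) - Adisc μ Δx ρ (j - 2))| ≤ B + B :=
      le_trans (abs_sub _ _) (add_le_add h2 h3)
    calc θ * |(Adisc μ Δx ρ (j + 1) - Adisc μ Δx ρ j)
        - (Adisc μ Δx ρ (j - 1) - Adisc μ Δx ρ (j - 2))|
        ≤ θ * (B + B) := mul_le_mul_of_nonneg_left h4 hθ0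
      _ = 2 * θ * B := by ring
  refine ⟨h1, le_of_le_of_eq hs (by rw [hB]; ring), ?_, ?_⟩
  · have e : AdiscL μ θ Δx ρ j - AdiscL μ θ Δx ρ (j - 1)
        = (Adisc μ Δx ρ j - Adisc μ Δx ρ (j - 1))
          + (sdisc μ θ Δx ρ j - sdisc μ θ Δx ρ (j - 1)) / 2 := by
      simp only [AdiscL]; ring
    rw [e]
    have := le_trans (abs_add_le _ _) (add_le_add h1 (by rw [abs_div]; simp; linarith [hs, abs_nonneg (sdisc μ θ Δx ρ j - sdisc μ θ Δx ρ (j - 1))] : |(sdisc μ θ Δx ρ j - sdisc μ θ Δx ρ (j - 1)) / 2| ≤ θ * B))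
    calc |(Adisc μ Δx ρ j - Adisc μ Δx ρ (j - 1))
          + (sdisc μ θ Δx ρ j - sdisc μ θ Δx ρ (j - 1)) / 2| ≤ B + θ * B := this
      _ = (1 + θ) * Δx * Cμ' * (Δx * ∑' l : ℤ, ρ l) := by rw [hB]; ring
  · have e : AdiscR μ θ Δx ρ j - AdiscR μ θ Δx ρ (j - 1)
        = (Adisc μ Δx ρ j - Adisc μ Δx ρ (j - 1))
          - (sdisc μ θ Δx ρ j - sdisc μ θ Δx ρ (j - 1)) / 2 := by
      simp only [AdiscR]; ring
    rw [e]
    have hs2 : |(sdisc μ θ Δx ρ j - sdisc μ θ Δx ρ (j - 1)) / 2| ≤ θ * B := by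
      rw [abs_div]; simp; linarith
    have := le_trans (abs_sub _ _) (add_le_add h1 hs2)
    calc |(Adisc μ Δx ρ j - Adisc μ Δx ρ (j - 1))
          - (sdisc μ θ Δx ρ j - sdisc μ θ Δx ρ (j - 1)) / 2| ≤ B + θ * B := this
      _ = (1 + θ) * Δx * Cμ' * (Δx * ∑' l : ℤ, ρ l) := by rw [hB]; ring
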